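/- Let μ be a non-negative locally finite Borel measure on ℝ. Define, for α ∈ (0,1), the sharp Tauberian constant C^μ(α) := sup over measurable E ⊆ ℝ with 0 < μ(E) < ∞ of μ({x : M^μ(1_E)(x) > α})/μ(E), where M^μ is the uncentered Hardy–Littlewood maximal operator with respect to μ. Then C^μ(α) - 1 ≤ 2(1-α)/α for all α ∈ (0,1). -/

import Mathlib

open MeasureTheory Set
open scoped ENNReal NNReal

/-- The uncentered one-dimensional Hardy–Littlewood maximal operator with respect to
a Borel measure `μ`. -/
noncomputable def Mmu (μ : Measure ℝ) (f : ℝ → ℝ) (x : ℝ) : ℝ :=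
  sSup {r : ℝ | ∃ a b : ℝ, a < b ∧ x ∈ Set.Ioo a b ∧ 0 < μ (Set.Ioo a b) ∧
    r = (μ (Set.Ioo a b)).toReal⁻¹ * ∫ y in Set.Ioo a b, |f y| ∂μ}

/-- The sharp Tauberian constant of `Mmu`. -/
noncomputable def Cmu (μ : Measure ℝ) (α : ℝ) : ℝ≥0∞ :=
  ⨆ (E : Set ℝ) (_ : MeasurableSet E) (_ : 0 < μ E) (_ : μ E < ⊤),
    μ {x | α < Mmu μ (E.indicator 1) x} / μ E

attribute [local instance] Classical.propDecidable

/-! ### Auxiliary lemmas -/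

/-- The "middle interval" lemma: if `x` lies in two intervals whose endpoints flank those
of `Ioo a b`, then `Ioo a b` is contained in their union. -/
lemma mid_subset {a b c d e f x : ℝ} (hca : c ≤ a) (hbf : b ≤ f)
    (hx1 : x ∈ Set.Ioo c d) (hx2 : x ∈ Set.Ioo e f) :
    Set.Ioo a b ⊆ Set.Ioo c d ∪ Set.Ioo e f := by
  intro y hy
  rcases le_or_gt y x with h | h
  · exact Or.inl ⟨lt_of_le_of_lt hca hy.1, lt_of_le_of_lt h hx1.2⟩
  · exact Or.inr ⟨lt_trans hx2.1 h, lt_of_lt_of_le hy.2 hbf⟩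

/-- Among three open intervals with a common point, one is contained in the union of the
other two. -/
lemma three_intervals {p q r : ℝ × ℝ} {x : ℝ}
    (hp : x ∈ Set.Ioo p.1 p.2) (hq : x ∈ Set.Ioo q.1 q.2) (hr : x ∈ Set.Ioo r.1 r.2) :
    (Set.Ioo p.1 p.2 ⊆ Set.Ioo q.1 q.2 ∪ Set.Ioo r.1 r.2) ∨
    (Set.Ioo q.1 q.2 ⊆ Set.Ioo p.1 p.2 ∪ Set.Ioo r.1 r.2) ∨
    (Set.Ioo r.1 r.2 ⊆ Set.Ioo p.1 p.2 ∪ Set.Ioo q.1 q.2) := by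
  rcases le_total p.1 q.1 with h1 | h1
  · rcases le_total p.1 r.1 with h2 | h2
    · -- p.1 is minimal
      rcases le_total q.2 r.2 with h3 | h3
      · exact Or.inr (Or.inl (mid_subset h1 h3 hp hr))
      · exact Or.inr (Or.inr (mid_subset h2 h3 hp hq))
    · -- r.1 ≤ p.1 ≤ q.1 : r.1 minimal
      rcases le_total p.2 q.2 with h3 | h3
      · exact Or.inl (fun y hy => (mid_subset h2 h3 hr hq hy).symm)
      · exact Or.inr (Or.inl (fun y hy => (mid_subset (h2.trans h1) h3 hr hp hy).symm))
  · rcases le_total q.1 r.1 with h2 | h2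
    · -- q.1 minimal
      rcases le_total p.2 r.2 with h3 | h3
      · exact Or.inl (mid_subset h1 h3 hq hr)
      · exact Or.inr (Or.inr (fun y hy => (mid_subset h2 h3 hq hp hy).symm))
    · -- r.1 ≤ q.1 ≤ p.1 : r.1 minimal
      rcases le_total p.2 q.2 with h3 | h3
      · exact Or.inl (fun y hy => (mid_subset (h2.trans h1) h3 hr hq hy).symm)
      · exact Or.inr (Or.inl (fun y hy => (mid_subset h2 h3 hr hp hy).symm))

/-- From any finite cover of `K` by open intervals one can extract a subcover in which
every point is covered at most twice. -/
lemma select (K : Set ℝ) :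
    ∀ s : Finset (ℝ × ℝ), K ⊆ (⋃ p ∈ s, Set.Ioo p.1 p.2) →
      ∃ t ⊆ s, (K ⊆ ⋃ p ∈ t, Set.Ioo p.1 p.2) ∧
        ∀ x : ℝ, (t.filter fun p => x ∈ Set.Ioo p.1 p.2).card ≤ 2 := by
  intro s
  induction s using Finset.strongInduction with
  | _ s ih =>
    intro hcov
    by_cases hm : ∀ x : ℝ, (s.filter fun p => x ∈ Set.Ioo p.1 p.2).card ≤ 2
    · exact ⟨s, le_refl _, hcov, hm⟩
    push_neg at hm
    obtain ⟨x, hx⟩ := hm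
    set f := s.filter fun p => x ∈ Set.Ioo p.1 p.2 with hf
    have h3 : 3 ≤ f.card := hx
    have hfne : f.Nonempty := Finset.card_pos.mp (by omega)
    obtain ⟨p, hpf⟩ := hfne
    have h2 : 2 ≤ (f.erase p).card := by
      rw [Finset.card_erase_of_mem hpf]; omega
    have hfne2 : (f.erase p).Nonempty := Finset.card_pos.mp (by omega)
    obtain ⟨q, hqf⟩ := hfne2
    have h1 : 1 ≤ ((f.erase p).erase q).card := by
      rw [Finset.card_erase_of_mem hqf]; omega
    have hfne3 : ((f.erase p).erase q).Nonempty := Finset.card_pos.mp (by omega)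
    obtain ⟨r, hrf⟩ := hfne3
    have hqp : q ≠ p := (Finset.mem_erase.mp hqf).1
    have hrq : r ≠ q := (Finset.mem_erase.mp hrf).1
    have hrp : r ≠ p := (Finset.mem_erase.mp ((Finset.mem_erase.mp hrf).2)).1
    have hq' : q ∈ f := (Finset.mem_erase.mp hqf).2
    have hr' : r ∈ f := (Finset.mem_erase.mp ((Finset.mem_erase.mp hrf).2)).2
    have hps : p ∈ s := (Finset.mem_filter.mp hpf).1
    have hqs : q ∈ s := (Finset.mem_filter.mp hq').1
    have hrs : r ∈ s := (Finset.mem_filter.mp hr').1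
    have hxp : x ∈ Set.Ioo p.1 p.2 := (Finset.mem_filter.mp hpf).2
    have hxq : x ∈ Set.Ioo q.1 q.2 := (Finset.mem_filter.mp hq').2
    have hxr : x ∈ Set.Ioo r.1 r.2 := (Finset.mem_filter.mp hr').2
    -- helper to finish once we know which interval is redundant
    have step : ∀ k i j : ℝ × ℝ, k ∈ s → i ∈ s → j ∈ s → i ≠ k → j ≠ k →
        Set.Ioo k.1 k.2 ⊆ Set.Ioo i.1 i.2 ∪ Set.Ioo j.1 j.2 →
        ∃ t ⊆ s, (K ⊆ ⋃ p ∈ t, Set.Ioo p.1 p.2) ∧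
          ∀ x : ℝ, (t.filter fun p => x ∈ Set.Ioo p.1 p.2).card ≤ 2 := by
      intro k i j hks his hjs hik hjk hsub
      have hcov' : K ⊆ ⋃ m ∈ s.erase k, Set.Ioo m.1 m.2 := by
        intro y hy
        have := hcov hy
        simp only [Set.mem_iUnion, exists_prop] at this ⊢
        obtain ⟨m, hms, hym⟩ := this
        by_cases hmk : m = k
        · subst hmk
          rcases hsub hym with h | h
          · exact ⟨i, Finset.mem_erase.mpr ⟨hik, his⟩, h⟩
          · exact ⟨j, Finset.mem_erase.mpr ⟨hjk, hjs⟩, h⟩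
        · exact ⟨m, Finset.mem_erase.mpr ⟨hmk, hms⟩, hym⟩
      obtain ⟨t, hts, htcov, htm⟩ := ih (s.erase k) (Finset.erase_ssubset hks) hcov'
      exact ⟨t, hts.trans (Finset.erase_subset _ _), htcov, htm⟩
    rcases three_intervals hxp hxq hxr with h | h | h
    · exact step p q r hps hqs hrs hqp hrp h
    · exact step q p r hqs hps hrs (Ne.symm hqp) hrq h
    · exact step r p q hrs hps hqs (Ne.symm hrp) (Ne.symm hrq) h

/-- If each point is covered at most twice by the intervals of `t`, the sum of the measures
of the intersections with `E` is at most `2 * μ E`. -/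
lemma sum_inter_le (μ : Measure ℝ) {E : Set ℝ} (hE : MeasurableSet E)
    (t : Finset (ℝ × ℝ))
    (hmult : ∀ x : ℝ, (t.filter fun p => x ∈ Set.Ioo p.1 p.2).card ≤ 2) :
    ∑ p ∈ t, μ (Set.Ioo p.1 p.2 ∩ E) ≤ 2 * μ E := by
  have hmeas : ∀ p : ℝ × ℝ, MeasurableSet (Set.Ioo p.1 p.2 ∩ E) :=
    fun p => measurableSet_Ioo.inter hE
  calc ∑ p ∈ t, μ (Set.Ioo p.1 p.2 ∩ E)
      = ∑ p ∈ t, ∫⁻ x, (Set.Ioo p.1 p.2 ∩ E).indicator 1 x ∂μ := by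
        refine Finset.sum_congr rfl fun p _ => ?_
        rw [lintegral_indicator_one (hmeas p)]
    _ = ∫⁻ x, ∑ p ∈ t, (Set.Ioo p.1 p.2 ∩ E).indicator 1 x ∂μ := by
        rw [lintegral_finset_sum]
        exact fun p _ => measurable_one.indicator (hmeas p)
    _ ≤ ∫⁻ x, 2 * E.indicator 1 x ∂μ := by
        refine lintegral_mono fun x => ?_
        by_cases hxE : x ∈ E
        · have : ∀ p : ℝ × ℝ, (Set.Ioo p.1 p.2 ∩ E).indicator (1 : ℝ → ℝ≥0∞) x
              = if x ∈ Set.Ioo p.1 p.2 then 1 else 0 := by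
            intro p
            by_cases hxp : x ∈ Set.Ioo p.1 p.2 <;>
              simp [Set.indicator_apply, hxp, hxE]
          simp only [this]
          rw [Finset.sum_boole]
          have := hmult x
          simp only [Set.indicator_of_mem hxE, Pi.one_apply, mul_one]
          exact_mod_cast this
        · have : ∀ p : ℝ × ℝ, (Set.Ioo p.1 p.2 ∩ E).indicator (1 : ℝ → ℝ≥0∞) x = 0 := by
            intro p
            simp [Set.indicator_apply, hxE]
          simp [this, Set.indicator_of_notMem hxE]
    _ = 2 * μ E := by
        rw [lintegral_const_mul 2 (measurable_one.indicator hE), lintegral_indicator_one hE]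

/-- From `α < Mmu μ (E.indicator 1) x` extract a "good" interval containing `x`. -/
lemma exists_good (μ : Measure ℝ) [IsLocallyFiniteMeasure μ] {E : Set ℝ}
    (hE : MeasurableSet E) {α : ℝ} (hα0 : 0 < α) (hα1 : α < 1) {x : ℝ}
    (hx : α < Mmu μ (E.indicator 1) x) :
    ∃ p : ℝ × ℝ, x ∈ Set.Ioo p.1 p.2 ∧ p.1 < p.2 ∧
      μ (Set.Ioo p.1 p.2 \ E) ≤ ENNReal.ofReal ((1 - α) / α) * μ (Set.Ioo p.1 p.2 ∩ E) := by
  set S := {r : ℝ | ∃ a b : ℝ, a < b ∧ x ∈ Set.Ioo a b ∧ 0 < μ (Set.Ioo a b) ∧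
    r = (μ (Set.Ioo a b)).toReal⁻¹ * ∫ y in Set.Ioo a b, |(E.indicator 1 : ℝ → ℝ) y| ∂μ}
    with hS
  have hMmu : Mmu μ (E.indicator 1) x = sSup S := rfl
  -- the integral is the measure of the intersection
  have key : ∀ a b : ℝ, (∫ y in Set.Ioo a b, |(E.indicator 1 : ℝ → ℝ) y| ∂μ)
      = (μ (E ∩ Set.Ioo a b)).toReal := by
    intro a b
    have habs : ∀ y : ℝ, |(E.indicator 1 : ℝ → ℝ) y| = E.indicator 1 y := by
      intro y
      exact abs_of_nonneg (Set.indicator_nonneg (fun _ _ => zero_le_one) y)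
    simp_rw [habs]
    rw [integral_indicator_one hE, measureReal_def, Measure.restrict_apply hE]
  -- S is bounded above by 1
  have hbdd : BddAbove S := by
    refine ⟨1, fun r hr => ?_⟩
    obtain ⟨a, b, hab, hxab, hpos, hrval⟩ := hr
    have hfin : μ (Set.Ioo a b) < ⊤ := measure_Ioo_lt_top
    have htpos : 0 < (μ (Set.Ioo a b)).toReal := ENNReal.toReal_pos hpos.ne' hfin.ne
    rw [hrval, key]
    have hle : (μ (E ∩ Set.Ioo a b)).toReal ≤ (μ (Set.Ioo a b)).toReal :=
      ENNReal.toReal_mono hfin.ne (measure_mono Set.inter_subset_right)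
    rw [inv_mul_le_iff₀ htpos]
    linarith
  have hne : S.Nonempty := by
    by_contra hemp
    rw [Set.not_nonempty_iff_eq_empty] at hemp
    rw [hMmu, hemp, Real.sSup_empty] at hx
    linarith
  obtain ⟨r, hrS, hαr⟩ := (lt_csSup_iff hbdd hne).mp (by rwa [hMmu] at hx)
  obtain ⟨a, b, hab, hxab, hpos, hrval⟩ := hrS
  refine ⟨(a, b), hxab, hab, ?_⟩
  have hfin : μ (Set.Ioo a b) < ⊤ := measure_Ioo_lt_top
  have htpos : 0 < (μ (Set.Ioo a b)).toReal := ENNReal.toReal_pos hpos.ne' hfin.ne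
  rw [hrval, key] at hαr
  -- `α * μ(I) < μ(E ∩ I)` in real form
  have hmain : α * (μ (Set.Ioo a b)).toReal < (μ (E ∩ Set.Ioo a b)).toReal := by
    have h2 := mul_lt_mul_of_pos_right hαr htpos
    rw [inv_mul_eq_div, div_mul_cancel₀ _ htpos.ne'] at h2
    exact h2
  -- decompose the interval
  have hsplit : μ (Set.Ioo a b ∩ E) + μ (Set.Ioo a b \ E) = μ (Set.Ioo a b) :=
    measure_inter_add_diff _ hE
  have hfinI : μ (Set.Ioo a b ∩ E) < ⊤ :=
    lt_of_le_of_lt (measure_mono Set.inter_subset_left) hfin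
  have hfinD : μ (Set.Ioo a b \ E) < ⊤ :=
    lt_of_le_of_lt (measure_mono Set.diff_subset) hfin
  set A := (μ (Set.Ioo a b ∩ E)).toReal with hA
  set B := (μ (Set.Ioo a b \ E)).toReal with hB
  have hAB : A + B = (μ (Set.Ioo a b)).toReal := by
    rw [hA, hB, ← ENNReal.toReal_add hfinI.ne hfinD.ne, hsplit]
  have hAeq : (μ (E ∩ Set.Ioo a b)).toReal = A := by
    rw [hA, Set.inter_comm]
  rw [hAeq] at hmain
  rw [← hAB] at hmain
  -- B < (1-α)/α * A
  have hBbound : B ≤ (1 - α) / α * A := by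
    have h1 : B * α ≤ (1 - α) * A := by nlinarith [hmain]
    rw [div_mul_eq_mul_div, le_div_iff₀ hα0]
    exact h1
  have hA0 : 0 ≤ A := ENNReal.toReal_nonneg
  calc μ (Set.Ioo a b \ E) = ENNReal.ofReal B := by
        rw [hB, ENNReal.ofReal_toReal hfinD.ne]
    _ ≤ ENNReal.ofReal ((1 - α) / α * A) := ENNReal.ofReal_le_ofReal hBbound
    _ = ENNReal.ofReal ((1 - α) / α) * ENNReal.ofReal A :=
        ENNReal.ofReal_mul (div_nonneg (by linarith) hα0.le)
    _ = ENNReal.ofReal ((1 - α) / α) * μ (Set.Ioo a b ∩ E) := by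
        rw [hA, ENNReal.ofReal_toReal hfinI.ne]

/-- Solyanik estimate for the Tauberian constant with respect to a
locally finite Borel measure. -/
theorem stmt3 (μ : Measure ℝ) [IsLocallyFiniteMeasure μ]
    (α : ℝ) (hα0 : 0 < α) (hα1 : α < 1) :
    Cmu μ α - 1 ≤ ENNReal.ofReal (2 * (1 - α) / α) := by
  rw [tsub_le_iff_right, Cmu]
  set c := ENNReal.ofReal ((1 - α) / α) with hc
  have hc2 : ENNReal.ofReal (2 * (1 - α) / α) = 2 * c := by
    rw [hc, mul_div_assoc, ENNReal.ofReal_mul (by norm_num)]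
    norm_num
  rw [hc2]
  refine iSup_le fun E => iSup_le fun hE => iSup_le fun hE0 => iSup_le fun hEtop => ?_
  rw [ENNReal.div_le_iff hE0.ne' hEtop.ne]
  -- reduce to a bound on the measure of the superlevel set
  set good : ℝ × ℝ → Prop := fun p => p.1 < p.2 ∧
    μ (Set.Ioo p.1 p.2 \ E) ≤ c * μ (Set.Ioo p.1 p.2 ∩ E) with hgood
  set V := ⋃ p : {p : ℝ × ℝ // good p}, Set.Ioo p.1.1 p.1.2 with hV
  have hUV : {x | α < Mmu μ (E.indicator 1) x} ⊆ V := by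
    intro x hx
    obtain ⟨p, hxp, hlt, hbound⟩ := exists_good μ hE hα0 hα1 hx
    exact Set.mem_iUnion.mpr ⟨⟨p, hlt, hbound⟩, hxp⟩
  have hVopen : IsOpen V := isOpen_iUnion fun p => isOpen_Ioo
  have hKbound : ∀ K : Set ℝ, K ⊆ V → IsCompact K → μ K ≤ (2 * c + 1) * μ E := by
    intro K hKV hKc
    obtain ⟨s', hs'⟩ := hKc.elim_finite_subcover
      (fun p : {p : ℝ × ℝ // good p} => Set.Ioo p.1.1 p.1.2)
      (fun p => isOpen_Ioo) (hV ▸ hKV)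
    set s : Finset (ℝ × ℝ) := s'.image Subtype.val with hs
    have hscov : K ⊆ ⋃ p ∈ s, Set.Ioo p.1 p.2 := by
      intro y hy
      obtain ⟨i, hi, hyi⟩ := Set.mem_iUnion₂.mp (hs' hy)
      exact Set.mem_biUnion (Finset.mem_image_of_mem _ hi) hyi
    obtain ⟨t, hts, htcov, htm⟩ := select K s hscov
    have htgood : ∀ p ∈ t, good p := by
      intro p hpt
      obtain ⟨q, _, hq⟩ := Finset.mem_image.mp (hts hpt)
      exact hq ▸ q.2
    calc μ K ≤ μ (K ∩ E) + μ (K \ E) := measure_le_inter_add_diff μ K E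
      _ ≤ μ E + μ ((⋃ p ∈ t, Set.Ioo p.1 p.2) \ E) :=
          add_le_add (measure_mono Set.inter_subset_right)
            (measure_mono (Set.diff_subset_diff_left htcov))
      _ = μ E + μ (⋃ p ∈ t, Set.Ioo p.1 p.2 \ E) := by
          simp_rw [Set.iUnion_diff]
      _ ≤ μ E + ∑ p ∈ t, μ (Set.Ioo p.1 p.2 \ E) := by
          gcongr
          exact measure_biUnion_finset_le t _
      _ ≤ μ E + ∑ p ∈ t, c * μ (Set.Ioo p.1 p.2 ∩ E) := by
          gcongr with p hpt
          exact (htgood p hpt).2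
      _ = μ E + c * ∑ p ∈ t, μ (Set.Ioo p.1 p.2 ∩ E) := by
          rw [Finset.mul_sum]
      _ ≤ μ E + c * (2 * μ E) := by
          gcongr
          exact sum_inter_le μ hE t htm
      _ = (2 * c + 1) * μ E := by ring
  calc μ {x | α < Mmu μ (E.indicator 1) x} ≤ μ V := measure_mono hUV
    _ = ⨆ (K : Set ℝ) (_ : K ⊆ V) (_ : IsCompact K), μ K :=
        hVopen.measure_eq_iSup_isCompact μ
    _ ≤ (2 * c + 1) * μ E := by
        refine iSup_le fun K => iSup_le fun hKV => iSup_le fun hKc => hKbound K hKV hKc
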